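/- In the evaluation tree ET_M(t) of a closed term t under a set automaton M, for every node (s,p) and every successor (s',p.p') of (s,p), the position p.L(s) does not belong to the remaining work set W(s',p.p'). -/

import Mathlib

/-- A position is a finite list of positive natural numbers. -/
abbrev Pos : Type := List ℕ+

/-- `below p q` (written `p ≤ q` in the paper) holds iff `q` is a prefix of `p`. -/
def below (p q : Pos) : Prop := ∃ q'' : Pos, p = q ++ q''

/-- Terms over a signature `F`, with a single variable `ω` (patterns are linear). -/
inductive Tm (F : Type) : Type
  | var : Tm F
  | app : F → List (Tm F) → Tm F

variable {F : Type}

/-- Head symbol of a term (none for the variable). -/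
def hd : Tm F → Option F
  | .var => none
  | .app f _ => some f

/-- The subterm of `t` at position `p`, if `p` is in the domain of `t`. -/
def subtermAt : Tm F → Pos → Option (Tm F)
  | t, [] => some t
  | .var, _ :: _ => none
  | .app _ ts, i :: p => (ts[(i : ℕ) - 1]?).bind (fun u => subtermAt u p)

/-- The domain (set of positions) of a term. -/
def Dom (t : Tm F) : Set Pos := {p | (subtermAt t p).isSome}

/-- `t` is a closed term: it contains no variable. -/
def Closed (t : Tm F) : Prop := ∀ p u, subtermAt t p = some u → u ≠ Tm.var

/-- Terms that respect the arity function of the signature. -/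
inductive WF (ar : F → ℕ) : Tm F → Prop
  | var : WF ar Tm.var
  | app : ∀ f ts, ts.length = ar f → (∀ u ∈ ts, WF ar u) → WF ar (Tm.app f ts)

/-- Pattern `ℓ` matches term `t` at position `p`: for every non-variable
position `p'` of `ℓ`, the head symbols of `t[p.p']` and `ℓ[p']` agree. -/
def Matches (ℓ t : Tm F) (p : Pos) : Prop :=
  ∀ p' u, subtermAt ℓ p' = some u → u ≠ Tm.var →
    ∃ v, subtermAt t (p ++ p') = some v ∧ hd v = hd u

/-- A match obligation: a set of (subpattern, position) pairs. -/
abbrev Obl (F : Type) := Set (Tm F × Pos)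
/-- A match goal: a match obligation together with a match announcement. -/
abbrev Goal (F : Type) := Obl F × (Tm F × Pos)
/-- A state of the set automaton: a set of match goals. -/
abbrev St (F : Type) := Set (Goal F)

/-- The positions of a match obligation. -/
def posOf (mo : Obl F) : Set Pos := {p | ∃ u, (u, p) ∈ mo}

/-- All match obligation positions of a state. -/
def posMO (s : St F) : Set Pos := {p | ∃ g ∈ s, p ∈ posOf g.1}

/-- Reduction of a match obligation after observing a symbol of arity `n`
at position `p`: pairs at other positions are kept, and the pair at `p` is
replaced by obligations for its non-variable arguments. -/
def reduce (mo : Obl F) (n : ℕ) (p : Pos) : Obl F :=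
  {x | x ∈ mo ∧ x.2 ≠ p} ∪
  {x | ∃ (ℓ u : Tm F) (i : ℕ+), (ℓ, p) ∈ mo ∧ (i : ℕ) ≤ n ∧
        subtermAt ℓ [i] = some u ∧ u ≠ Tm.var ∧ x = (u, p ++ [i])}

/-- The `f`-derivative of state `s` labelled with position `lab`:
unchanged goals, reduced goals and fresh goals. -/
def derivS (pats : Set (Tm F)) (ar : F → ℕ) (s : St F) (lab : Pos) (f : F) : St F :=
  {g | g ∈ s ∧ lab ∉ posOf g.1} ∪
  {g | ∃ mo ma, (mo, ma) ∈ s ∧ (∃ ℓ, (ℓ, lab) ∈ mo ∧ hd ℓ = some f) ∧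
        reduce mo (ar f) lab ≠ ∅ ∧ g = (reduce mo (ar f) lab, ma)} ∪
  {g | ∃ (ℓ : Tm F) (i : ℕ+), ℓ ∈ pats ∧ (i : ℕ) ≤ ar f ∧
        g = ({(ℓ, lab ++ [i])}, (ℓ, lab ++ [i]))}

/-- The direct dependency relation: the obligation position sets intersect. -/
def dirDep (g₁ g₂ : Goal F) : Prop := (posOf g₁.1 ∩ posOf g₂.1).Nonempty

/-- `K` is an equivalence class of `X` under the transitive closure of the
direct dependency relation restricted to `X`. -/
def IsClass (X K : St F) : Prop :=
  ∃ g ∈ X, K = {g' | g' ∈ X ∧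
    Relation.ReflTransGen (fun a b => a ∈ X ∧ b ∈ X ∧ dirDep a b) g g'}

/-- The match announcement positions of a set of goals. -/
def posMA (K : St F) : Set Pos := {p | ∃ mo ℓ, (mo, (ℓ, p)) ∈ K}

/-- `g` is the greatest common prefix (join) of the set of positions `P`. -/
def IsGcp (P : Set Pos) (g : Pos) : Prop :=
  (∀ p ∈ P, below p g) ∧ ∀ r : Pos, (∀ p ∈ P, below p r) → below g r

/-- Lift a match goal by stripping the common prefix `g` from all positions. -/
def liftGoal (g : Pos) (x : Goal F) : Goal F :=
  ((fun y : Tm F × Pos => (y.1, y.2.drop g.length)) '' x.1,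
   (x.2.1, x.2.2.drop g.length))

/-- Lift a set of match goals. -/
def liftSt (g : Pos) (K : St F) : St F := liftGoal g '' K

/-- The transition function of the set automaton: `(s', p') ∈ delta pats ar L s f`
iff `s'` is the lifting of a dependency class `K` of the derivative and `p'` is
the greatest common prefix of the announcement positions of `K`. -/
def delta (pats : Set (Tm F)) (ar : F → ℕ) (L : St F → Pos) (s : St F) (f : F) :
    Set (St F × Pos) :=
  {x | ∃ K, IsClass (derivS pats ar s (L s) f) K ∧ IsGcp (posMA K) x.2 ∧
        x.1 = liftSt x.2 K}

/-- The initial state: all fresh root goals. -/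
def initSt (pats : Set (Tm F)) : St F :=
  {g | ∃ ℓ ∈ pats, g = ({(ℓ, ([] : Pos))}, (ℓ, ([] : Pos)))}

/-- Reachable states of the set automaton. -/
inductive Reachable (pats : Set (Tm F)) (ar : F → ℕ) (L : St F → Pos) : St F → Prop
  | init : Reachable pats ar L (initSt pats)
  | step : ∀ s f s' p, Reachable pats ar L s →
      (s', p) ∈ delta pats ar L s f → Reachable pats ar L s'

/-- The labelling function `L` picks, for every reachable state, an obligation
position of one of its root goals. -/
def RootLabel (pats : Set (Tm F)) (ar : F → ℕ) (L : St F → Pos) : Prop :=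
  ∀ s, Reachable pats ar L s →
    ∃ mo ℓ, (mo, (ℓ, ([] : Pos))) ∈ s ∧ L s ∈ posOf mo

/-- The nodes of the evaluation tree `ET_M(t)`. -/
inductive Node (pats : Set (Tm F)) (ar : F → ℕ) (L : St F → Pos) (t : Tm F) :
    St F → Pos → Prop
  | root : Node pats ar L t (initSt pats) []
  | step : ∀ s p f s' p', Node pats ar L t s p →
      (∃ v, subtermAt t (p ++ L s) = some v ∧ hd v = some f) →
      (s', p') ∈ delta pats ar L s f →
      Node pats ar L t s' (p ++ p')

/-- The edges of the evaluation tree `ET_M(t)`. -/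
def EdgeRel (pats : Set (Tm F)) (ar : F → ℕ) (L : St F → Pos) (t : Tm F)
    (s : St F) (p : Pos) (s' : St F) (q : Pos) : Prop :=
  Node pats ar L t s p ∧ ∃ f p',
    (∃ v, subtermAt t (p ++ L s) = some v ∧ hd v = some f) ∧
    (s', p') ∈ delta pats ar L s f ∧ q = p ++ p'

/-- The work set `W(s,p)`: the positions of `t` below the position pointer that
still have to be inspected. -/
def Work (t : Tm F) (s : St F) (p : Pos) : Set Pos :=
  {x | ∃ q, x = p ++ q ∧ x ∈ Dom t ∧ ∃ r ∈ posMO s, below q r}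

/-- The output function: match announcements whose obligation is completed by
observing `f` at the label position. -/
def outS (ar : F → ℕ) (L : St F → Pos) (s : St F) (f : F) : Set (Tm F × Pos) :=
  {ma | ({(Tm.app f (List.replicate (ar f) Tm.var), L s)}, ma) ∈ s}

/-! ### Auxiliary development -/

/-- All obligation positions of a goal extend its announcement position. -/
def GoodGoalAux (g : Goal F) : Prop := ∀ x ∈ g.1, g.2.2 <+: x.2

/-- The state invariant: goals are good, and distinct obligation positions
are incomparable. -/
def InvAux (s : St F) : Prop :=
  (∀ g ∈ s, GoodGoalAux g) ∧
  ∀ p₁ ∈ posMO s, ∀ p₂ ∈ posMO s, p₁ <+: p₂ → p₁ = p₂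

lemma below_iff_prefix (p q : Pos) : below p q ↔ q <+: p := by
  constructor
  · rintro ⟨q'', rfl⟩; exact ⟨q'', rfl⟩
  · rintro ⟨q'', rfl⟩; exact ⟨q'', rfl⟩

lemma drop_prefix_of_prefix {a b : Pos} (n : ℕ) (hn : n ≤ a.length)
    (h : a <+: b) : a.drop n <+: b.drop n := by
  obtain ⟨t, rfl⟩ := h
  rw [List.drop_append, Nat.sub_eq_zero_of_le hn, List.drop_zero]
  exact List.prefix_append _ _

lemma inv_initSt (pats : Set (Tm F)) : InvAux (initSt pats) := by
  constructor
  · rintro g ⟨ℓ, hℓ, rfl⟩ x hx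
    rcases hx with rfl
    exact List.nil_prefix
  · rintro p₁ ⟨g₁, ⟨ℓ₁, hℓ₁, rfl⟩, u₁, hu₁⟩ p₂ ⟨g₂, ⟨ℓ₂, hℓ₂, rfl⟩, u₂, hu₂⟩ _
    have h1 : (u₁, p₁) = (ℓ₁, ([] : Pos)) := hu₁
    have h2 : (u₂, p₂) = (ℓ₂, ([] : Pos)) := hu₂
    have e1 : p₁ = ([] : Pos) := congrArg Prod.snd h1
    have e2 : p₂ = ([] : Pos) := congrArg Prod.snd h2
    rw [e1, e2]

/-- Characterization of the obligation positions of the derivative. -/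
lemma posMO_derivS {pats : Set (Tm F)} {ar : F → ℕ} {s : St F} {lab : Pos}
    {f : F} {pp : Pos} (h : pp ∈ posMO (derivS pats ar s lab f)) :
    (pp ∈ posMO s ∧ pp ≠ lab) ∨ ∃ i : ℕ+, pp = lab ++ [i] := by
  obtain ⟨g, hg, u, hu⟩ := h
  rcases hg with (hg | hg) | hg
  · exact Or.inl ⟨⟨g, hg.1, u, hu⟩, fun he => hg.2 (he ▸ ⟨u, hu⟩)⟩
  · obtain ⟨mo, ma, hmo, _, _, hgeq⟩ := hg
    rw [hgeq] at hu
    rcases hu with hu | hu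
    · exact Or.inl ⟨⟨(mo, ma), hmo, u, hu.1⟩, hu.2⟩
    · obtain ⟨ℓ, u', i, _, _, _, _, hx⟩ := hu
      have : pp = lab ++ [i] := congrArg Prod.snd hx
      exact Or.inr ⟨i, this⟩
  · obtain ⟨ℓ, i, _, _, hgeq⟩ := hg
    rw [hgeq] at hu
    have hx : (u, pp) = (ℓ, lab ++ [i]) := hu
    exact Or.inr ⟨i, congrArg Prod.snd hx⟩

/-- Goals of the derivative are good. -/
lemma good_derivS {pats : Set (Tm F)} {ar : F → ℕ} {s : St F} {lab : Pos}
    {f : F} (hs : ∀ g ∈ s, GoodGoalAux g) :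
    ∀ g ∈ derivS pats ar s lab f, GoodGoalAux g := by
  rintro g hg x hx
  rcases hg with (hg | hg) | hg
  · exact hs g hg.1 x hx
  · obtain ⟨mo, ma, hmo, ⟨ℓ, hℓ, _⟩, _, hgeq⟩ := hg
    rw [hgeq] at hx ⊢
    rcases hx with hx | hx
    · exact hs (mo, ma) hmo x hx.1
    · obtain ⟨ℓ', u', i, hℓ', _, _, _, hxeq⟩ := hx
      have h1 : ma.2 <+: lab := hs (mo, ma) hmo (ℓ', lab) hℓ'
      have h2 : x.2 = lab ++ [i] := congrArg Prod.snd hxeq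
      rw [h2]
      exact h1.trans (List.prefix_append _ _)
  · obtain ⟨ℓ, i, _, _, hgeq⟩ := hg
    rw [hgeq] at hx ⊢
    rcases hx with hx
    have : x.2 = lab ++ [i] := congrArg Prod.snd hx
    simp [this]

/-- Obligation positions of a class `K` with gcp `p'` all have `p'` as prefix. -/
lemma prefix_of_posMO_class {K : St F} {p' : Pos}
    (hgood : ∀ g ∈ K, GoodGoalAux g) (hgcp : IsGcp (posMA K) p') :
    ∀ pq ∈ posMO K, p' <+: pq := by
  rintro pq ⟨g, hg, u, hu⟩
  have hma : g.2.2 ∈ posMA K := ⟨g.1, g.2.1, by rwa [show (g.1, (g.2.1, g.2.2)) = g from rfl]⟩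
  have h1 : p' <+: g.2.2 := (below_iff_prefix _ _).mp (hgcp.1 _ hma)
  exact h1.trans (hgood g hg (u, pq) hu)

/-- The invariant is preserved along transitions. -/
lemma inv_delta {pats : Set (Tm F)} {ar : F → ℕ} {L : St F → Pos} {s s' : St F}
    {p' : Pos} {f : F} (hs : InvAux s) (hLs : L s ∈ posMO s)
    (h : (s', p') ∈ delta pats ar L s f) : InvAux s' := by
  obtain ⟨K, hK, hgcp, hs'⟩ := h
  replace hs' : s' = liftSt p' K := hs'
  replace hgcp : IsGcp (posMA K) p' := hgcp
  obtain ⟨g₀, hg₀, hKeq⟩ := hK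
  have hKsub : K ⊆ derivS pats ar s (L s) f := by
    rw [hKeq]; exact fun g hg => hg.1
  have goodD := good_derivS (pats := pats) (ar := ar) (lab := L s) (f := f) hs.1
  have goodK : ∀ g ∈ K, GoodGoalAux g := fun g hg => goodD g (hKsub hg)
  have hpre : ∀ pq ∈ posMO K, p' <+: pq := prefix_of_posMO_class goodK hgcp
  -- incomparability in the derivative
  have incompD : ∀ p₁ ∈ posMO (derivS pats ar s (L s) f),
      ∀ p₂ ∈ posMO (derivS pats ar s (L s) f), p₁ <+: p₂ → p₁ = p₂ := by
    intro p₁ h₁ p₂ h₂ hpf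
    rcases posMO_derivS h₁ with ⟨hm₁, hne₁⟩ | ⟨i, rfl⟩
    · rcases posMO_derivS h₂ with ⟨hm₂, hne₂⟩ | ⟨j, rfl⟩
      · exact hs.2 p₁ hm₁ p₂ hm₂ hpf
      · by_cases hlen : p₁.length ≤ (L s).length
        · have : p₁ <+: L s :=
            List.prefix_of_prefix_length_le hpf (List.prefix_append _ _) hlen
          exact absurd (hs.2 p₁ hm₁ (L s) hLs this) hne₁
        · have hle := hpf.length_le
          simp only [List.length_append, List.length_singleton] at hle
          exact hpf.eq_of_length (by simp; omega)
    · rcases posMO_derivS h₂ with ⟨hm₂, hne₂⟩ | ⟨j, rfl⟩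
      · have h1 : L s <+: p₂ := (List.prefix_append _ _).trans hpf
        have := hs.2 (L s) hLs p₂ hm₂ h1
        rw [← this] at hpf
        have := hpf.length_le
        simp at this
      · exact hpf.eq_of_length (by simp)
  -- membership in posMO of the lifted state
  have hmemlift : ∀ pp ∈ posMO s', ∃ pq ∈ posMO K, pp = pq.drop p'.length := by
    rintro pp ⟨g', hg', u, hu⟩
    rw [hs'] at hg'
    obtain ⟨g, hg, rfl⟩ := hg'
    obtain ⟨y, hy, hyeq⟩ := hu
    refine ⟨y.2, ⟨g, hg, y.1, hy⟩, ?_⟩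
    exact (congrArg Prod.snd hyeq).symm
  constructor
  · -- goodness of lifted goals
    rintro g' hg' x hx
    rw [hs'] at hg'
    obtain ⟨g, hg, rfl⟩ := hg'
    obtain ⟨y, hy, rfl⟩ := hx
    have h1 : p' <+: g.2.2 := by
      have hma : g.2.2 ∈ posMA K :=
        ⟨g.1, g.2.1, by rwa [show (g.1, (g.2.1, g.2.2)) = g from rfl]⟩
      exact (below_iff_prefix _ _).mp (hgcp.1 _ hma)
    have h2 : g.2.2 <+: y.2 := goodK g hg y hy
    exact drop_prefix_of_prefix _ h1.length_le h2
  · -- incomparability in the lifted state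
    intro p₁ h₁ p₂ h₂ hpf
    obtain ⟨pq₁, hq₁, rfl⟩ := hmemlift p₁ h₁
    obtain ⟨pq₂, hq₂, rfl⟩ := hmemlift p₂ h₂
    obtain ⟨a₁, ha₁⟩ := hpre pq₁ hq₁
    obtain ⟨a₂, ha₂⟩ := hpre pq₂ hq₂
    have e₁ : pq₁.drop p'.length = a₁ := by rw [← ha₁]; simp
    have e₂ : pq₂.drop p'.length = a₂ := by rw [← ha₂]; simp
    rw [e₁, e₂] at hpf ⊢
    have hq : pq₁ <+: pq₂ := by
      rw [← ha₁, ← ha₂]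
      obtain ⟨z, hz⟩ := hpf
      exact ⟨z, by rw [List.append_assoc, hz]⟩
    have := incompD pq₁ (by
        obtain ⟨g, hg, w, hw⟩ := hq₁; exact ⟨g, hKsub hg, w, hw⟩)
      pq₂ (by obtain ⟨g, hg, w, hw⟩ := hq₂; exact ⟨g, hKsub hg, w, hw⟩) hq
    rw [← ha₁, ← ha₂] at this
    exact List.append_cancel_left this

lemma reachable_of_node {pats : Set (Tm F)} {ar : F → ℕ} {L : St F → Pos}
    {t : Tm F} {s : St F} {p : Pos} (h : Node pats ar L t s p) :
    Reachable pats ar L s := by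
  induction h with
  | root => exact Reachable.init
  | step s p f s' p' _ _ hd ih => exact Reachable.step s f s' p' ih hd

lemma posMO_of_rootLabel {pats : Set (Tm F)} {ar : F → ℕ} {L : St F → Pos}
    (hL : RootLabel pats ar L) {s : St F} (hr : Reachable pats ar L s) :
    L s ∈ posMO s := by
  obtain ⟨mo, ℓ, hmem, hpos⟩ := hL s hr
  exact ⟨(mo, (ℓ, [])), hmem, hpos⟩

lemma inv_of_reachable {pats : Set (Tm F)} {ar : F → ℕ} {L : St F → Pos}
    (hL : RootLabel pats ar L) {s : St F} (hr : Reachable pats ar L s) :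
    InvAux s := by
  induction hr with
  | init => exact inv_initSt pats
  | step s f s' p hre hd ih =>
      exact inv_delta ih (posMO_of_rootLabel hL hre) hd

/-- In the evaluation tree of a closed term `t`, for every node `(s,p)` and
every successor `(s',p.p')`, the inspected position `p.L(s)` is not in the
remaining work set of the successor. -/
theorem inspected_not_in_successor_work {F : Type} (pats : Set (Tm F))
    (ar : F → ℕ) (L : St F → Pos) (t : Tm F) (hc : Closed t) (hw : WF ar t)
    (hpats : pats.Nonempty) (hWF : ∀ ℓ ∈ pats, WF ar ℓ)
    (hpv : ∀ ℓ ∈ pats, ℓ ≠ Tm.var) (hL : RootLabel pats ar L) :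
    ∀ (s : St F) (p : Pos) (s' : St F) (q : Pos),
      EdgeRel pats ar L t s p s' q → (p ++ L s) ∉ Work t s' q := by
  rintro s p s' q ⟨hnode, f, p', ⟨v, hv, hf⟩, hdelta, rfl⟩ hwork
  obtain ⟨q'', heq, hdom, r, hr, hbel⟩ := hwork
  have hreach := reachable_of_node hnode
  have hinv := inv_of_reachable hL hreach
  have hLs := posMO_of_rootLabel hL hreach
  have hLeq : L s = p' ++ q'' := by
    apply List.append_cancel_left (as := p)
    rw [heq, List.append_assoc]
  obtain ⟨K, hK, hgcp, hs'⟩ := hdelta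
  replace hs' : s' = liftSt p' K := hs'
  replace hgcp : IsGcp (posMA K) p' := hgcp
  obtain ⟨g₀, hg₀, hKeq⟩ := hK
  have hKsub : K ⊆ derivS pats ar s (L s) f := by
    rw [hKeq]; exact fun g hg => hg.1
  have goodD := good_derivS (pats := pats) (ar := ar) (lab := L s) (f := f) hinv.1
  have goodK : ∀ g ∈ K, GoodGoalAux g := fun g hg => goodD g (hKsub hg)
  have hpre := prefix_of_posMO_class goodK hgcp
  -- unpack r ∈ posMO s'
  obtain ⟨g', hg', u, hu⟩ := hr
  rw [hs'] at hg'
  obtain ⟨g, hg, rfl⟩ := hg'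
  obtain ⟨y, hy, hyeq⟩ := hu
  have hrK : y.2 ∈ posMO K := ⟨g, hg, y.1, hy⟩
  obtain ⟨a, ha⟩ := hpre y.2 hrK
  have hra : r = a := by
    have : r = y.2.drop p'.length := (congrArg Prod.snd hyeq).symm
    rw [this, ← ha]; simp
  -- y.2 = p' ++ r is a prefix of L s = p' ++ q''
  obtain ⟨z, hz⟩ := (below_iff_prefix _ _).mp hbel
  have hprefLs : y.2 <+: L s := by
    rw [← ha, ← hra, hLeq, ← hz, ← List.append_assoc]
    exact List.prefix_append _ _
  have hyD : y.2 ∈ posMO (derivS pats ar s (L s) f) :=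
    ⟨g, hKsub hg, y.1, hy⟩
  rcases posMO_derivS hyD with ⟨hm, hne⟩ | ⟨i, hi⟩
  · exact hne (hinv.2 y.2 hm (L s) hLs hprefLs)
  · rw [hi] at hprefLs
    have := hprefLs.length_le
    simp at this
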